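/- arXiv:1403.1502 — 2 statements merged into one kernel-verified Lean document; each statement's English description precedes it below -/
import Mathlib

section
/- 𝓛_hyp ⊆ E_V: for all positive roots α, β ∈ Φ⁺ with 𝓑(α,β) < −1 and every nonzero z ∈ V with 𝓑(z,α) = 𝓑(z,β) = 0, the direction z̄ is a limit direction of (W,S)_B. -/
open Projectivization Filter Topology TensorProduct
open scoped LinearAlgebra.Projectivization

noncomputable section

/-- The representation space `V`: functions `S → ℝ`, with the simple roots as standard basis. -/
abbrev Vec (S : Type) : Type := S → ℝ

/-- The simple root associated to a generator `s ∈ S`. -/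
def simpleRoot {S : Type} [DecidableEq S] (s : S) : Vec S := Pi.single s 1

/-- The symmetric bilinear form on `V` determined by the matrix `k`. -/
def Bform {S : Type} [Fintype S] (k : S → S → ℝ) (x y : Vec S) : ℝ :=
  ∑ s : S, ∑ t : S, x s * k s t * y t

instance {S : Type} : TopologicalSpace (ℙ ℝ (Vec S)) :=
  inferInstanceAs (TopologicalSpace (Quotient (projectivizationSetoid ℝ (Vec S))))

/-- `p` is an accumulation point of `Y`: every neighbourhood of `p` contains a point of `Y`
different from `p`. -/
def IsAccumPt {X : Type*} [TopologicalSpace X] (p : X) (Y : Set X) : Prop :=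
  ∀ U ∈ nhds p, ∃ y ∈ Y, y ∈ U ∧ y ≠ p

/-- A Lorentzian Coxeter system `(W,S)_B`: a Coxeter system `(W,S)` together with a symmetric
matrix `k` (with entries `-cos (π / m s t)` for `m s t` finite and arbitrary entries `≤ -1`
for `m s t = ∞`, encoded by `M s t = 0`), whose bilinear form has signature `(n-1, 1)`,
and the faithful geometric representation `ρ` of `W` on `V`, sending each simple reflection
to the `𝓑`-reflection in the corresponding simple root, and preserving `𝓑`. -/
structure LorentzianCoxeterSystem (S W : Type) [Fintype S] [DecidableEq S] [Group W] where
  M : CoxeterMatrix S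
  cs : CoxeterSystem M W
  k : S → S → ℝ
  k_symm : ∀ s t, k s t = k t s
  k_fin : ∀ s t, M s t ≠ 0 → k s t = - Real.cos (Real.pi / (M s t : ℝ))
  k_inf : ∀ s t, M s t = 0 → k s t ≤ -1
  ρ : W →* (Vec S ≃ₗ[ℝ] Vec S)
  ρ_inj : Function.Injective ρ
  ρ_simple : ∀ (s : S) (x : Vec S),
    ρ (cs.simple s) x =
      x - (2 * Bform k x (simpleRoot s) / Bform k (simpleRoot s) (simpleRoot s)) • simpleRoot s
  ρ_preserves : ∀ (w : W) (x y : Vec S), Bform k (ρ w x) (ρ w y) = Bform k x y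
  lorentzian : ∃ b : Module.Basis (Fin (Fintype.card S)) ℝ (Vec S), ∀ i j,
    Bform k (b i) (b j) =
      if i = j then (if (i : ℕ) + 1 = Fintype.card S then -1 else 1) else 0

namespace LorentzianCoxeterSystem

variable {S W : Type} [Fintype S] [DecidableEq S] [Group W]
variable (G : LorentzianCoxeterSystem S W)

/-- The root system `Φ = W(Δ)`. -/
def rootSet : Set (Vec S) := {v | ∃ (w : W) (s : S), v = G.ρ w (simpleRoot s)}

/-- The positive roots `Φ⁺ = Φ ∩ cone(Δ)`. -/
def posRootSet : Set (Vec S) := {v | v ∈ G.rootSet ∧ ∀ s, 0 ≤ v s}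

/-- The set of projective roots `ℙΦ`. -/
def projRootSet : Set (ℙ ℝ (Vec S)) :=
  {p | ∃ (v : Vec S) (hv : v ≠ 0), v ∈ G.rootSet ∧ p = Projectivization.mk ℝ v hv}

/-- The set of limit roots `E_Φ`: accumulation points of the projective roots. -/
def limitRoots : Set (ℙ ℝ (Vec S)) := {p | IsAccumPt p G.projRootSet}

/-- The projective action of `w ∈ W` on `ℙ V`. -/
def pact (w : W) (p : ℙ ℝ (Vec S)) : ℙ ℝ (Vec S) :=
  Projectivization.map ((G.ρ w : Vec S ≃ₗ[ℝ] Vec S) : Vec S →ₗ[ℝ] Vec S) (G.ρ w).injective p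

/-- The set of limit directions `E_V`. -/
def limitDirections : Set (ℙ ℝ (Vec S)) :=
  {p | ∃ (p₀ : ℙ ℝ (Vec S)) (w : ℕ → W),
    Function.Injective (fun i => G.pact (w i) p₀) ∧
    Tendsto (fun i => G.pact (w i) p₀) atTop (nhds p)}

/-- The set `𝓛_hyp`: union over pairs of positive roots `α, β` with `𝓑(α,β) < -1` of the
projectivization of the codimension-2 subspace orthogonal to both. -/
def Lhyp : Set (ℙ ℝ (Vec S)) :=
  {p | ∃ a ∈ G.posRootSet, ∃ b ∈ G.posRootSet, Bform G.k a b < -1 ∧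
    ∃ (z : Vec S) (hz : z ≠ 0), Bform G.k z a = 0 ∧ Bform G.k z b = 0 ∧
      p = Projectivization.mk ℝ z hz}

/-- The complexification of `ρ(w)`, an endomorphism of `ℂ ⊗[ℝ] V`. -/
def endC (w : W) : Module.End ℂ (ℂ ⊗[ℝ] Vec S) :=
  LinearMap.baseChange ℂ ((G.ρ w : Vec S ≃ₗ[ℝ] Vec S) : Vec S →ₗ[ℝ] Vec S)

/-- All complex eigenvalues of the complexification of `ρ(w)` have absolute value 1. -/
def AllEigenvaluesUnimodular (w : W) : Prop :=
  ∀ μ : ℂ, Module.End.HasEigenvalue (G.endC w) μ → ‖μ‖ = 1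

/-- The complexification of `ρ(w)` is diagonalizable. -/
def DiagonalizableC (w : W) : Prop :=
  (⨆ μ : ℂ, Module.End.eigenspace (G.endC w) μ) = ⊤

/-- The unimodular subspace `U_w ⊆ V`: vectors whose image in `ℂ ⊗[ℝ] V` lies in the sum of
the eigenspaces of the complexification of `ρ(w)` for eigenvalues of absolute value 1. -/
def USet (w : W) : Set (Vec S) :=
  {v | ((1 : ℂ) ⊗ₜ[ℝ] v : ℂ ⊗[ℝ] Vec S) ∈
    ⨆ (μ : ℂ) (_ : ‖μ‖ = 1), Module.End.eigenspace (G.endC w) μ}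

/-- The projective unimodular subspace `ℙ U_w`. -/
def projU (w : W) : Set (ℙ ℝ (Vec S)) :=
  {p | ∃ (v : Vec S) (hv : v ≠ 0), v ∈ G.USet w ∧ p = Projectivization.mk ℝ v hv}

/-- The product `w_n = s₁ s₂ ⋯ s_n` of the first `n` letters of the word `ω`. -/
def prefixProd (ω : ℕ → S) (n : ℕ) : W :=
  G.cs.wordProd (List.ofFn (fun i : Fin n => ω i))

/-- `ω` is an infinite reduced word: each prefix is reduced. -/
def IsInfiniteReducedWord (ω : ℕ → S) : Prop :=
  ∀ n, G.cs.length (G.prefixProd ω n) = n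

/-- The inversion set `inv(𝐰) = {w_{k-1}(α_{s_k}) : k ≥ 1}` of an infinite word. -/
def invSet (ω : ℕ → S) : Set (Vec S) :=
  {v | ∃ n : ℕ, v = G.ρ (G.prefixProd ω n) (simpleRoot (ω n))}

/-- The projective inversion set `ℙ(inv(𝐰))`. -/
def projInvSet (ω : ℕ → S) : Set (ℙ ℝ (Vec S)) :=
  {p | ∃ (v : Vec S) (hv : v ≠ 0), v ∈ G.invSet ω ∧ p = Projectivization.mk ℝ v hv}

/-- A subset `A` of the positive roots is closed if any positive root which is a nonnegative
combination of two elements of `A` is in `A`. -/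
def IsClosedRootSubset (A : Set (Vec S)) : Prop :=
  ∀ a ∈ A, ∀ b ∈ A, ∀ x y : ℝ, 0 ≤ x → 0 ≤ y →
    x • a + y • b ∈ G.posRootSet → x • a + y • b ∈ A

end LorentzianCoxeterSystem

open LorentzianCoxeterSystem Filter

variable {S W : Type} [Fintype S] [DecidableEq S] [Group W]

set_option linter.unusedSectionVars false

section BformLemmas
variable {S : Type} [Fintype S] [DecidableEq S]

lemma Bform_add_left (k : S → S → ℝ) (x y v : Vec S) :
    Bform k (x + y) v = Bform k x v + Bform k y v := by
  simp [Bform, add_mul, Finset.sum_add_distrib]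

lemma Bform_smul_left (k : S → S → ℝ) (r : ℝ) (x v : Vec S) :
    Bform k (r • x) v = r * Bform k x v := by
  simp only [Bform, Pi.smul_apply, smul_eq_mul, Finset.mul_sum]
  exact Finset.sum_congr rfl fun s _ => Finset.sum_congr rfl fun t _ => by ring

lemma Bform_add_right (k : S → S → ℝ) (x u v : Vec S) :
    Bform k x (u + v) = Bform k x u + Bform k x v := by
  simp [Bform, mul_add, Finset.sum_add_distrib]

lemma Bform_smul_right (k : S → S → ℝ) (r : ℝ) (x v : Vec S) :
    Bform k x (r • v) = r * Bform k x v := by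
  simp only [Bform, Pi.smul_apply, smul_eq_mul, Finset.mul_sum]
  exact Finset.sum_congr rfl fun s _ => Finset.sum_congr rfl fun t _ => by ring

lemma Bform_sub_left (k : S → S → ℝ) (x y v : Vec S) :
    Bform k (x - y) v = Bform k x v - Bform k y v := by
  simp [Bform, sub_mul, Finset.sum_sub_distrib]

lemma Bform_zero_left (k : S → S → ℝ) (v : Vec S) : Bform k 0 v = 0 := by
  simp [Bform]

lemma Bform_comm (k : S → S → ℝ) (hk : ∀ s t, k s t = k t s) (x y : Vec S) :
    Bform k x y = Bform k y x := by
  rw [Bform, Finset.sum_comm]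
  exact Finset.sum_congr rfl fun t _ => Finset.sum_congr rfl fun s _ => by rw [hk s t]; ring

lemma Bform_single (k : S → S → ℝ) (s : S) :
    Bform k (simpleRoot s) (simpleRoot s) = k s s := by
  simp [Bform, simpleRoot, Pi.single_apply]

lemma Projectivization.mk_congr {v v' : Vec S} (h : v = v') (hv : v ≠ 0) :
    Projectivization.mk ℝ v hv = Projectivization.mk ℝ v' (h ▸ hv) := by subst h; rfl

end BformLemmas

namespace LorentzianCoxeterSystem
variable {S W : Type} [Fintype S] [DecidableEq S] [Group W] (G : LorentzianCoxeterSystem S W)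

lemma rho_mul_apply (u v : W) (x : Vec S) : G.ρ (u * v) x = G.ρ u (G.ρ v x) := by
  rw [map_mul]; rfl

lemma k_diag (s : S) : G.k s s = 1 := by
  have h1 : G.M s s = 1 := G.M.diagonal s
  have := G.k_fin s s (by rw [h1]; exact one_ne_zero)
  rw [this, h1]
  norm_num

lemma Bform_simple_self (s : S) :
    Bform G.k (simpleRoot s) (simpleRoot s) = 1 := by
  rw [Bform_single, G.k_diag]

lemma refl_apply (w : W) (s : S) (x : Vec S) :
    G.ρ (w * G.cs.simple s * w⁻¹) x
      = x - (2 * Bform G.k x (G.ρ w (simpleRoot s))) • (G.ρ w (simpleRoot s)) := by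
  have h1 : G.ρ (w * G.cs.simple s * w⁻¹) x
      = G.ρ w (G.ρ (G.cs.simple s) (G.ρ w⁻¹ x)) := by
    rw [rho_mul_apply, rho_mul_apply]
  have hinv : ∀ u : Vec S, G.ρ w (G.ρ w⁻¹ u) = u := by
    intro u
    rw [← rho_mul_apply, mul_inv_cancel, map_one]
    rfl
  have hpre : Bform G.k (G.ρ w⁻¹ x) (simpleRoot s)
      = Bform G.k x (G.ρ w (simpleRoot s)) := by
    have h2 : G.ρ w⁻¹ (G.ρ w (simpleRoot s)) = simpleRoot s := by
      rw [← rho_mul_apply, inv_mul_cancel, map_one]; rfl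
    calc Bform G.k (G.ρ w⁻¹ x) (simpleRoot s)
        = Bform G.k (G.ρ w⁻¹ x) (G.ρ w⁻¹ (G.ρ w (simpleRoot s))) := by rw [h2]
      _ = Bform G.k x (G.ρ w (simpleRoot s)) := G.ρ_preserves w⁻¹ x _
  rw [h1, G.ρ_simple, map_sub, map_smul, hinv, G.Bform_simple_self, hpre]
  norm_num

lemma Bform_rho_self (w : W) (s : S) :
    Bform G.k (G.ρ w (simpleRoot s)) (G.ρ w (simpleRoot s)) = 1 := by
  rw [G.ρ_preserves, G.Bform_simple_self]

end LorentzianCoxeterSystem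
/-- `𝓛_hyp ⊆ E_V`: for positive roots `a, b` with `𝓑(a,b) < -1`, every nonzero `z`
orthogonal to both gives a limit direction. -/
theorem Lhyp_subset_limitDirections (G : LorentzianCoxeterSystem S W)
    (a : Vec S) (ha : a ∈ G.posRootSet) (b : Vec S) (hb : b ∈ G.posRootSet)
    (hab : Bform G.k a b < -1)
    (z : Vec S) (hz : z ≠ 0) (hza : Bform G.k z a = 0) (hzb : Bform G.k z b = 0) :
    Projectivization.mk ℝ z hz ∈ G.limitDirections := by
  classical
  obtain ⟨⟨wa, sa, haeq⟩, -⟩ := ha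
  obtain ⟨⟨wb, sb, hbeq⟩, -⟩ := hb
  set c : ℝ := -Bform G.k a b with hc_def
  have hc : 1 < c := by rw [hc_def]; linarith
  have hab' : Bform G.k a b = -c := by rw [hc_def]; ring
  have hs0 : (0:ℝ) ≤ c^2 - 1 := by nlinarith
  have hsq : Real.sqrt (c^2 - 1) ^ 2 = c^2 - 1 := Real.sq_sqrt hs0
  have hsqnn : 0 ≤ Real.sqrt (c^2 - 1) := Real.sqrt_nonneg _
  set d : ℝ := c + Real.sqrt (c^2 - 1) with hd_def
  have hd1 : 1 < d := by rw [hd_def]; nlinarith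
  have key : d^2 = 2*c*d - 1 := by rw [hd_def]; nlinarith
  set q : ℝ := 2*c - d with hq_def
  have hqd : q * d = 1 := by rw [hq_def]; nlinarith
  have hq0 : 0 < q := by nlinarith
  have hq1 : q < 1 := by nlinarith
  have hq2 : q^2 < 1 := by nlinarith
  -- the reflections in a and b and the hyperbolic element g
  set ra : W := wa * G.cs.simple sa * wa⁻¹ with hra_def
  set rb : W := wb * G.cs.simple sb * wb⁻¹ with hrb_def
  have hra : ∀ x, G.ρ ra x = x - (2 * Bform G.k x a) • a := by
    intro x; rw [hra_def, haeq]; exact G.refl_apply wa sa x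
  have hrb : ∀ x, G.ρ rb x = x - (2 * Bform G.k x b) • b := by
    intro x; rw [hrb_def, hbeq]; exact G.refl_apply wb sb x
  have haa : Bform G.k a a = 1 := by rw [haeq]; exact G.Bform_rho_self wa sa
  have hbb : Bform G.k b b = 1 := by rw [hbeq]; exact G.Bform_rho_self wb sb
  have hba : Bform G.k b a = -c := by
    rw [Bform_comm G.k G.k_symm, hab']
  set g : W := ra * rb with hg_def
  set y : Vec S := a + d • b with hy_def
  have hgz : G.ρ g z = z := by
    have h1 : G.ρ rb z = z := by rw [hrb, hzb]; simp
    have h2 : G.ρ ra z = z := by rw [hra, hza]; simp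
    rw [hg_def, G.rho_mul_apply, h1, h2]
  have hyb : Bform G.k y b = d - c := by
    rw [hy_def, Bform_add_left, Bform_smul_left, hab', hbb]; ring
  have hya : Bform G.k y a = 1 - d*c := by
    rw [hy_def, Bform_add_left, Bform_smul_left, haa, hba]; ring
  have hrby : G.ρ rb y = a + q • b := by
    rw [hrb, hyb, hy_def]
    have e0 : d - 2*(d-c) = q := by rw [hq_def]; ring
    rw [show (2 * (d - c)) • b = (d - q) • b from by rw [← e0]; congr 1; ring]
    module
  have hray : G.ρ ra (a + q • b) = (q^2) • y := by
    rw [hra, Bform_add_left, Bform_smul_left, haa, hba]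
    have e1 : (2 * (1 + q * (-c))) = 1 - q^2 := by rw [hq_def]; linear_combination key
    have e2 : q ^ 2 * d = q := by linear_combination q * hqd
    rw [e1, hy_def, smul_add, smul_smul, e2]
    module
  have hgy : G.ρ g y = (q^2) • y := by
    rw [hg_def, G.rho_mul_apply, hrby, hray]
  -- action of powers of g
  have hgnz : ∀ m : ℕ, G.ρ (g^m) z = z := by
    intro m; induction m with
    | zero => rw [pow_zero, map_one]; rfl
    | succ n ih => rw [pow_succ, G.rho_mul_apply, hgz, ih]
  have hgny : ∀ m : ℕ, G.ρ (g^m) y = ((q^2)^m) • y := by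
    intro m; induction m with
    | zero => rw [pow_zero, map_one, pow_zero, one_smul]; rfl
    | succ n ih =>
      rw [pow_succ, G.rho_mul_apply, hgy, map_smul, ih, smul_smul, pow_succ]
      congr 1; ring
  have hgn : ∀ m : ℕ, G.ρ (g^m) (z + y) = z + ((q^2)^m) • y := by
    intro m; rw [map_add, hgnz, hgny]
  -- nonvanishing
  have hya_ne : (1 : ℝ) - d*c ≠ 0 := by nlinarith
  have hne : ∀ r : ℝ, z + r • y ≠ 0 := by
    intro r h
    have h0 : Bform G.k (z + r • y) a = r * (1 - d*c) := by
      rw [Bform_add_left, Bform_smul_left, hza, hya]; ring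
    rw [h, Bform_zero_left] at h0
    rcases mul_eq_zero.mp h0.symm with h1 | h1
    · rw [h1, zero_smul, add_zero] at h; exact hz h
    · exact hya_ne h1
  have hzy : z + y ≠ 0 := by have := hne 1; rwa [one_smul] at this
  have keym : ∀ m : ℕ, G.pact (g^m) (Projectivization.mk ℝ (z+y) hzy)
      = Projectivization.mk ℝ (z + ((q^2)^m) • y) (hne _) := by
    intro m
    rw [LorentzianCoxeterSystem.pact, Projectivization.map_mk]
    exact Projectivization.mk_congr (hgn m) _
  refine ⟨Projectivization.mk ℝ (z + y) hzy, fun m => g^m, ?_, ?_⟩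
  · -- injectivity
    simp only [keym]
    intro m m' h
    rw [Projectivization.mk_eq_mk_iff'] at h
    obtain ⟨t, ht⟩ := h
    have hB := congrArg (fun v => Bform G.k v a) ht
    simp only [Bform_smul_left, Bform_add_left, hza, hya] at hB
    have htr : t * (q^2)^m' = (q^2)^m := by
      have h3 : (t * (q^2)^m') * (1 - d*c) = (q^2)^m * (1 - d*c) := by
        linear_combination hB
      exact mul_right_cancel₀ hya_ne h3
    rw [smul_add, smul_smul, htr] at ht
    have hzz : t • z = z := add_right_cancel ht
    have ht1 : t = 1 := by
      by_contra h1
      have h5 : (t - 1) • z = 0 := by rw [sub_smul, hzz, one_smul, sub_self]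
      exact hz ((smul_eq_zero.mp h5).resolve_left (sub_ne_zero.mpr h1))
    rw [ht1, one_mul] at htr
    have hstrict : StrictAnti (fun m : ℕ => (q^2)^m) := fun m n hmn =>
      pow_lt_pow_right_of_lt_one₀ (by positivity) hq2 hmn
    exact (hstrict.injective htr).symm
  · -- convergence
    simp only [keym]
    have hv : Tendsto (fun m : ℕ => z + ((q^2)^m) • y) atTop (nhds z) := by
      have h0 : Tendsto (fun m : ℕ => ((q^2)^m : ℝ)) atTop (nhds 0) :=
        tendsto_pow_atTop_nhds_zero_of_lt_one (by positivity) hq2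
      have h2 : Tendsto (fun m : ℕ => z + ((q^2)^m) • y) atTop
          (nhds (z + (0:ℝ) • y)) := tendsto_const_nhds.add (h0.smul_const y)
      simpa using h2
    have hsub : Tendsto
        (fun m : ℕ => (⟨z + ((q^2)^m) • y, hne _⟩ : {v : Vec S // v ≠ 0}))
        atTop (nhds ⟨z, hz⟩) := by
      rw [tendsto_subtype_rng]; exact hv
    exact ((continuous_quotient_mk').tendsto _).comp hsub
end
end

section
/- Let G be a group acting on a topological space X and let H be a subgroup of G of finite index. Then a point x ∈ X is a limit point of H if and only if it is a limit point of G; that is, there exists x₀ ∈ X such that x is an accumulation point of the orbit H·x₀ if and only if there exists x₀′ ∈ X such that x is an accumulation point of the orbit G·x₀′. -/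
lemma isAccumPt_mono {X : Type*} [TopologicalSpace X] {p : X} {Y Z : Set X}
    (hYZ : Y ⊆ Z) (h : IsAccumPt p Y) : IsAccumPt p Z := by
  intro U hU
  obtain ⟨y, hyY, hyU, hyp⟩ := h U hU
  exact ⟨y, hYZ hyY, hyU, hyp⟩

lemma isAccumPt_iUnion {X ι : Type*} [TopologicalSpace X] [Finite ι] {p : X} {Y : ι → Set X}
    (h : IsAccumPt p (⋃ i, Y i)) : ∃ i, IsAccumPt p (Y i) := by
  by_contra hc
  push_neg at hc
  simp only [IsAccumPt, not_forall, not_exists] at hc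
  choose U hU hU' using hc
  obtain ⟨y, hyY, hyU, hyp⟩ := h (⋂ i, U i) (Filter.iInter_mem.2 hU)
  obtain ⟨_, ⟨i, rfl⟩, hyi⟩ := hyY
  exact hU' i y ⟨hyi, Set.mem_iInter.1 hyU i, hyp⟩

/-- For a group `G` acting on a topological space `X` and a finite-index subgroup `H ≤ G`,
a point is a limit point of `H` iff it is a limit point of `G`. -/
theorem limitPoint_subgroup_iff_limitPoint_of_finiteIndex {G X : Type*} [Group G]
    [MulAction G X] [TopologicalSpace X] (H : Subgroup G) (hH : H.index ≠ 0) (x : X) :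
    (∃ x₀ : X, IsAccumPt x (MulAction.orbit H x₀)) ↔
    (∃ x₀' : X, IsAccumPt x (MulAction.orbit G x₀')) := by
  constructor
  · rintro ⟨x₀, hx₀⟩
    refine ⟨x₀, isAccumPt_mono ?_ hx₀⟩
    rintro y ⟨h, rfl⟩
    exact ⟨(h : G), rfl⟩
  · rintro ⟨x₀, hx₀⟩
    have hfin : Finite (G ⧸ H) := by
      rw [Subgroup.index] at hH
      exact (Nat.card_ne_zero.1 hH).2
    have hsub : MulAction.orbit G x₀ ⊆
        ⋃ q : G ⧸ H, MulAction.orbit H ((Quotient.out q)⁻¹ • x₀) := by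
      rintro y ⟨g, rfl⟩
      refine Set.mem_iUnion.2 ⟨(g⁻¹ : G), ?_⟩
      set r := Quotient.out ((g⁻¹ : G) : G ⧸ H) with hr
      have hrel : (r : G ⧸ H) = ((g⁻¹ : G) : G ⧸ H) := Quotient.out_eq' _
      have : g⁻¹⁻¹ * r ∈ H := (QuotientGroup.eq.1 hrel.symm)
      refine ⟨⟨g * r, by simpa using this⟩, ?_⟩
      show (g * r) • (r⁻¹ • x₀) = g • x₀
      rw [smul_smul, mul_assoc, mul_inv_cancel, mul_one]
    obtain ⟨q, hq⟩ := isAccumPt_iUnion (isAccumPt_mono hsub hx₀)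
    exact ⟨_, hq⟩
end
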